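/- Let θ ∈ ℝ with sin θ ≠ 0 and suppose every entire C² solution of h_xx·h_yy − h_xy² = 1 on ℝ² is a quadratic polynomial (Jörgens' theorem). Then every entire C² solution F of cos θ·(F_xx + F_yy) + sin θ·(F_xx·F_yy − F_xy² − 1) = 0 on ℝ² is a quadratic polynomial. -/

import Mathlib

noncomputable def pdx (u : ℝ → ℝ → ℝ) (x y : ℝ) : ℝ := deriv (fun t => u t y) x
noncomputable def pdy (u : ℝ → ℝ → ℝ) (x y : ℝ) : ℝ := deriv (fun t => u x t) y

noncomputable def pxx (u : ℝ → ℝ → ℝ) : ℝ → ℝ → ℝ := pdx (pdx u)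
noncomputable def pyy (u : ℝ → ℝ → ℝ) : ℝ → ℝ → ℝ := pdy (pdy u)
noncomputable def pxy (u : ℝ → ℝ → ℝ) : ℝ → ℝ → ℝ := pdy (pdx u)

def IsC2 (u : ℝ → ℝ → ℝ) : Prop := ContDiff ℝ 2 (Function.uncurry u)

def IsQuadratic (u : ℝ → ℝ → ℝ) : Prop :=
  ∃ a b c d e f : ℝ, ∀ x y : ℝ, u x y = a*x^2 + b*x*y + c*y^2 + d*x + e*y + f

lemma hasDerivAt_x (u : ℝ → ℝ → ℝ) (hu : IsC2 u) (x y : ℝ) :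
    HasDerivAt (fun t => u t y) ((fderiv ℝ (Function.uncurry u) (x, y)) (1, 0)) x := by
  have hd := ((hu.differentiable (by norm_num)) (x, y)).hasFDerivAt
  have hline : HasDerivAt (fun t : ℝ => ((t, y) : ℝ × ℝ)) ((1 : ℝ), (0 : ℝ)) x :=
    (hasDerivAt_id x).prodMk (hasDerivAt_const x y)
  exact hd.comp_hasDerivAt x hline

lemma hasDerivAt_y (u : ℝ → ℝ → ℝ) (hu : IsC2 u) (x y : ℝ) :
    HasDerivAt (fun t => u x t) ((fderiv ℝ (Function.uncurry u) (x, y)) (0, 1)) y := by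
  have hd := ((hu.differentiable (by norm_num)) (x, y)).hasFDerivAt
  have hline : HasDerivAt (fun t : ℝ => ((x, t) : ℝ × ℝ)) ((0 : ℝ), (1 : ℝ)) y :=
    (hasDerivAt_const y x).prodMk (hasDerivAt_id y)
  exact hd.comp_hasDerivAt y hline

lemma pdx_eq (u : ℝ → ℝ → ℝ) (hu : IsC2 u) (x y : ℝ) :
    pdx u x y = (fderiv ℝ (Function.uncurry u) (x, y)) (1, 0) :=
  (hasDerivAt_x u hu x y).deriv

lemma fderiv_c1 (u : ℝ → ℝ → ℝ) (hu : IsC2 u) :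
    ContDiff ℝ 1 (fderiv ℝ (Function.uncurry u)) :=
  hu.fderiv_right (by norm_num)

lemma diff_pdx_x (u : ℝ → ℝ → ℝ) (hu : IsC2 u) (y : ℝ) :
    Differentiable ℝ (fun t => pdx u t y) := by
  have h1 : Differentiable ℝ (fun t : ℝ => fderiv ℝ (Function.uncurry u) (t, y)) :=
    ((fderiv_c1 u hu).differentiable one_ne_zero).comp
      (differentiable_id.prodMk (differentiable_const y))
  have h2 : Differentiable ℝ (fun t : ℝ => (fderiv ℝ (Function.uncurry u) (t, y)) (1, 0)) :=
    h1.clm_apply (differentiable_const _)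
  intro x
  exact h2.differentiableAt.congr_of_eventuallyEq
    (Filter.Eventually.of_forall fun t => pdx_eq u hu t y)

lemma diff_pdx_y (u : ℝ → ℝ → ℝ) (hu : IsC2 u) (x : ℝ) :
    Differentiable ℝ (fun t => pdx u x t) := by
  have h1 : Differentiable ℝ (fun t : ℝ => fderiv ℝ (Function.uncurry u) (x, t)) :=
    ((fderiv_c1 u hu).differentiable one_ne_zero).comp
      ((differentiable_const x).prodMk differentiable_id)
  have h2 : Differentiable ℝ (fun t : ℝ => (fderiv ℝ (Function.uncurry u) (x, t)) (1, 0)) :=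
    h1.clm_apply (differentiable_const _)
  intro y
  exact h2.differentiableAt.congr_of_eventuallyEq
    (Filter.Eventually.of_forall fun t => pdx_eq u hu x t)

lemma diff_pdy_y (u : ℝ → ℝ → ℝ) (hu : IsC2 u) (x : ℝ) :
    Differentiable ℝ (fun t => pdy u x t) := by
  have h1 : Differentiable ℝ (fun t : ℝ => fderiv ℝ (Function.uncurry u) (x, t)) :=
    ((fderiv_c1 u hu).differentiable one_ne_zero).comp
      ((differentiable_const x).prodMk differentiable_id)
  have h2 : Differentiable ℝ (fun t : ℝ => (fderiv ℝ (Function.uncurry u) (x, t)) (0, 1)) :=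
    h1.clm_apply (differentiable_const _)
  intro y
  exact h2.differentiableAt.congr_of_eventuallyEq
    (Filter.Eventually.of_forall fun t => (hasDerivAt_y u hu x t).deriv)

theorem stmt_2 (θ : ℝ) (hθ : Real.sin θ ≠ 0)
    (jorgens : ∀ h : ℝ → ℝ → ℝ, IsC2 h →
      (∀ x y : ℝ, pxx h x y * pyy h x y - (pxy h x y)^2 = 1) → IsQuadratic h)
    (F : ℝ → ℝ → ℝ) (hF : IsC2 F)
    (hSLE : ∀ x y : ℝ, Real.cos θ * (pxx F x y + pyy F x y) +
      Real.sin θ * (pxx F x y * pyy F x y - (pxy F x y)^2 - 1) = 0) :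
    IsQuadratic F := by
  set s := Real.sin θ with hs
  set c := Real.cos θ with hc
  set G : ℝ → ℝ → ℝ := fun x y => s * F x y + c / 2 * (x ^ 2 + y ^ 2) with hG
  have hG2 : IsC2 G := by
    have h : Function.uncurry G = fun p : ℝ × ℝ =>
        s * Function.uncurry F p + c / 2 * (p.1 ^ 2 + p.2 ^ 2) := rfl
    rw [IsC2, h]
    exact (contDiff_const.mul hF).add
      (contDiff_const.mul ((contDiff_fst.pow 2).add (contDiff_snd.pow 2)))
  have hpdxG : ∀ x y : ℝ, pdx G x y = s * pdx F x y + c * x := by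
    intro x y
    have h1 : HasDerivAt (fun t => F t y) (pdx F x y) x :=
      (hasDerivAt_x F hF x y).differentiableAt.hasDerivAt
    have h2 : HasDerivAt (fun t : ℝ => c / 2 * (t ^ 2 + y ^ 2)) (c * x) x := by
      have h3 : HasDerivAt (fun t : ℝ => c / 2 * (t ^ 2 + y ^ 2))
          (c / 2 * ((2 : ℕ) * x ^ (2 - 1) + 0)) x :=
        (((hasDerivAt_pow 2 x).add (hasDerivAt_const x (y ^ 2)))).const_mul (c / 2)
      convert h3 using 1
      push_cast; ring
    exact ((h1.const_mul s).add h2).deriv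
  have hpdyG : ∀ x y : ℝ, pdy G x y = s * pdy F x y + c * y := by
    intro x y
    have h1 : HasDerivAt (fun t => F x t) (pdy F x y) y :=
      (hasDerivAt_y F hF x y).differentiableAt.hasDerivAt
    have h2 : HasDerivAt (fun t : ℝ => c / 2 * (x ^ 2 + t ^ 2)) (c * y) y := by
      have h3 : HasDerivAt (fun t : ℝ => c / 2 * (x ^ 2 + t ^ 2))
          (c / 2 * (0 + (2 : ℕ) * y ^ (2 - 1))) y :=
        (((hasDerivAt_const y (x ^ 2)).add (hasDerivAt_pow 2 y))).const_mul (c / 2)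
      convert h3 using 1
      push_cast; ring
    exact ((h1.const_mul s).add h2).deriv
  have hxx : ∀ x y : ℝ, pxx G x y = s * pxx F x y + c := by
    intro x y
    have heq : (fun t => pdx G t y) = fun t => s * pdx F t y + c * t :=
      funext fun t => hpdxG t y
    have h1 : HasDerivAt (fun t => pdx F t y) (pxx F x y) x :=
      (diff_pdx_x F hF y x).hasDerivAt
    have h2 : HasDerivAt (fun t : ℝ => c * t) c x := by
      simpa using (hasDerivAt_id x).const_mul c
    have := ((h1.const_mul s).add h2).deriv
    show deriv (fun t => pdx G t y) x = _
    rw [heq]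
    exact this
  have hyy : ∀ x y : ℝ, pyy G x y = s * pyy F x y + c := by
    intro x y
    have heq : (fun t => pdy G x t) = fun t => s * pdy F x t + c * t :=
      funext fun t => hpdyG x t
    have h1 : HasDerivAt (fun t => pdy F x t) (pyy F x y) y :=
      (diff_pdy_y F hF x y).hasDerivAt
    have h2 : HasDerivAt (fun t : ℝ => c * t) c y := by
      simpa using (hasDerivAt_id y).const_mul c
    have := ((h1.const_mul s).add h2).deriv
    show deriv (fun t => pdy G x t) y = _
    rw [heq]
    exact this
  have hxy : ∀ x y : ℝ, pxy G x y = s * pxy F x y := by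
    intro x y
    have heq : (fun t => pdx G x t) = fun t => s * pdx F x t + c * x :=
      funext fun t => hpdxG x t
    have h1 : HasDerivAt (fun t => pdx F x t) (pxy F x y) y :=
      (diff_pdx_y F hF x y).hasDerivAt
    have := ((h1.const_mul s).add (hasDerivAt_const y (c * x))).deriv
    show deriv (fun t => pdx G x t) y = _
    rw [heq]
    exact this.trans (add_zero _)
  have hDet : ∀ x y : ℝ, pxx G x y * pyy G x y - (pxy G x y) ^ 2 = 1 := by
    intro x y
    rw [hxx, hyy, hxy]
    have h := hSLE x y
    have hpyth : s ^ 2 + c ^ 2 = 1 := Real.sin_sq_add_cos_sq θ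
    linear_combination s * h + hpyth
  obtain ⟨a, b, c', d, e, f, hq⟩ := jorgens G hG2 hDet
  refine ⟨(a - c / 2) / s, b / s, (c' - c / 2) / s, d / s, e / s, f / s, fun x y => ?_⟩
  have h := hq x y
  have h2 : s * F x y + c / 2 * (x ^ 2 + y ^ 2)
      = a * x ^ 2 + b * x * y + c' * y ^ 2 + d * x + e * y + f := h
  have key : F x y * s = a * x ^ 2 + b * x * y + c' * y ^ 2 + d * x + e * y + f
      - c / 2 * (x ^ 2 + y ^ 2) := by linear_combination h2
  calc F x y = (F x y * s) / s := by field_simp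
    _ = _ := by rw [key]; field_simp; ring
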